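/- Let d ≥ 2 and ε₀ ∈ (0, 1). Then the (d−1)-dimensional surface measure of the spherical cap ∂B_R(0) ∩ B_1(x_{R+t}), where x_{R+t} = (R+t, 0, …, 0), satisfies inf_{R ≥ 1} inf_{t ∈ [−1+ε₀, 1−ε₀]} |∂B_R(0) ∩ B_1(x_{R+t})| > 0; more precisely, this measure is comparable (with constants depending only on d) to (R² − a(R,t)²)^{(d−1)/2}, where {x₁ = a(R,t)} is the hyperplane containing ∂B_R(0) ∩ ∂B_1(x_{R+t}), and R² − a(R,t)² ≥ ε₀/4 for all R ≥ 1 and |t| ≤ 1−ε₀. -/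

import Mathlib

open MeasureTheory Metric Set Filter ENNReal
noncomputable section

abbrev Euc (d : ℕ) := EuclideanSpace ℝ (Fin d)

/-- The `(d-1)`-dimensional (Hausdorff) surface measure of the spherical cap
`∂B_R(0) ∩ B_1((R+t) • e)`. -/
def capMeasure (d : ℕ) (e : Euc d) (R t : ℝ) : ℝ≥0∞ :=
  μH[(d : ℝ) - 1] (sphere (0 : Euc d) R ∩ ball ((R + t) • e) 1)

/-- The abscissa `a(R,t)` of the hyperplane containing `∂B_R(0) ∩ ∂B_1((R+t)e₁)`. -/
def capAbscissa (R t : ℝ) : ℝ :=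
  (R ^ 2 + (R + t) ^ 2 - 1) / (2 * (R + t))

open scoped NNReal
set_option maxHeartbeats 1000000

namespace Stmt8Aux

/-! ### Coordinate helpers -/

lemma euc_ext {m : ℕ} {x y : Euc m} (h : ∀ i, x i = y i) : x = y := PiLp.ext h

lemma euc_norm_sq {m : ℕ} (x : Euc m) : ‖x‖ ^ 2 = ∑ i, x i ^ 2 := by
  rw [EuclideanSpace.norm_eq, Real.sq_sqrt (by positivity)]
  simp [Real.norm_eq_abs, sq_abs]

lemma euc_dist_sq {m : ℕ} (x y : Euc m) : dist x y ^ 2 = ∑ i, (x i - y i) ^ 2 := by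
  rw [EuclideanSpace.dist_eq, Real.sq_sqrt (by positivity)]
  simp [Real.dist_eq, sq_abs]

def remE {n : ℕ} (i : Fin (n+1)) (x : Euc (n+1)) : Euc n :=
  (WithLp.equiv 2 (∀ _ : Fin n, ℝ)).symm (fun j => x (i.succAbove j))

@[simp] lemma remE_apply {n : ℕ} (i : Fin (n+1)) (x : Euc (n+1)) (j : Fin n) :
    remE i x j = x (i.succAbove j) := rfl

def insE {n : ℕ} (i : Fin (n+1)) (c : ℝ) (z : Euc n) : Euc (n+1) :=
  (WithLp.equiv 2 (∀ _ : Fin (n+1), ℝ)).symm (Fin.insertNth i c (fun j => z j))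

@[simp] lemma insE_same {n : ℕ} (i : Fin (n+1)) (c : ℝ) (z : Euc n) : insE i c z i = c := by
  simp [insE, PiLp.toLp_apply]

@[simp] lemma insE_succAbove {n : ℕ} (i : Fin (n+1)) (c : ℝ) (z : Euc n) (j : Fin n) :
    insE i c z (i.succAbove j) = z j := by
  simp [insE, PiLp.toLp_apply]

lemma insE_remE {n : ℕ} (i : Fin (n+1)) (x : Euc (n+1)) : insE i (x i) (remE i x) = x := by
  refine euc_ext fun k => ?_
  rcases eq_or_ne k i with rfl | hk
  · simp
  · obtain ⟨j, hj⟩ := Fin.exists_succAbove_eq hk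
    rw [← hj]; simp

lemma remE_norm_sq {n : ℕ} (i : Fin (n+1)) (x : Euc (n+1)) :
    ‖x‖ ^ 2 = x i ^ 2 + ‖remE i x‖ ^ 2 := by
  rw [euc_norm_sq, euc_norm_sq, Fin.sum_univ_succAbove _ i]
  simp

lemma insE_norm_sq {n : ℕ} (i : Fin (n+1)) (c : ℝ) (z : Euc n) :
    ‖insE i c z‖ ^ 2 = c ^ 2 + ‖z‖ ^ 2 := by
  rw [euc_norm_sq, euc_norm_sq, Fin.sum_univ_succAbove _ i]
  simp

lemma insE_dist_sq {n : ℕ} (i : Fin (n+1)) (c c' : ℝ) (z w : Euc n) :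
    dist (insE i c z) (insE i c' w) ^ 2 = (c - c') ^ 2 + dist z w ^ 2 := by
  rw [euc_dist_sq, euc_dist_sq, Fin.sum_univ_succAbove _ i]
  simp

lemma remE_dist_le {n : ℕ} (i : Fin (n+1)) (x y : Euc (n+1)) :
    dist (remE i x) (remE i y) ≤ dist x y := by
  have h1 : dist (remE i x) (remE i y) ^ 2 ≤ dist x y ^ 2 := by
    rw [euc_dist_sq, euc_dist_sq, Fin.sum_univ_succAbove _ i]
    simp only [remE_apply]
    nlinarith [sq_nonneg (x i - y i)]
  nlinarith [dist_nonneg (x := remE i x) (y := remE i y), dist_nonneg (x := x) (y := y)]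

lemma remE_lipschitz {n : ℕ} (i : Fin (n+1)) : LipschitzWith 1 (remE i) := by
  apply LipschitzWith.of_dist_le_mul
  intro x y
  simpa using remE_dist_le i x y

lemma abs_coord_le_norm {m : ℕ} (x : Euc m) (i : Fin m) : |x i| ≤ ‖x‖ := by
  have h : x i ^ 2 ≤ ‖x‖ ^ 2 := by
    rw [euc_norm_sq]
    exact Finset.single_le_sum (f := fun j => x j ^ 2) (fun j _ => sq_nonneg _) (Finset.mem_univ i)
  nlinarith [abs_nonneg (x i), norm_nonneg x, sq_abs (x i)]

/-! ### Hausdorff measure versus Lebesgue measure on `Euc m` -/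

lemma muH_pi_eq_vol (m : ℕ) : (μH[(m:ℝ)] : Measure (∀ _ : Fin m, ℝ)) = volume := by
  have := hausdorffMeasure_pi_real (ι := Fin m)
  simpa using this

lemma vol_le_muH {m : ℕ} (s : Set (Euc m)) :
    volume ((WithLp.equiv 2 (∀ _ : Fin m, ℝ)) '' s) ≤ μH[(m:ℝ)] s := by
  have h := (PiLp.lipschitzWith_ofLp 2 (fun _ : Fin m => ℝ)).hausdorffMeasure_image_le
    (d := (m:ℝ)) (by positivity) s
  rw [muH_pi_eq_vol] at h
  simpa using h

lemma muH_le_vol {m : ℕ} (hm : 0 < m) (s : Set (Euc m)) :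
    μH[(m:ℝ)] s ≤ ENNReal.ofReal (Real.sqrt m ^ m) *
      volume ((WithLp.equiv 2 (∀ _ : Fin m, ℝ)) '' s) := by
  set e := WithLp.equiv 2 (∀ _ : Fin m, ℝ)
  have hlip : LipschitzWith ((m : ℝ≥0) ^ ((1 : ℝ)/2)) e.symm := by
    have h := (PiLp.antilipschitzWith_ofLp 2 (fun _ : Fin m => ℝ)).to_rightInverse
      (e.right_inv)
    have : ((Fintype.card (Fin m) : ℝ≥0) ^ (1 / (2:ℝ≥0∞)).toReal) = ((m : ℝ≥0) ^ ((1 : ℝ)/2)) := by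
      norm_num [ENNReal.toReal_div]
    rwa [this] at h
  have h := hlip.hausdorffMeasure_image_le (d := (m:ℝ)) (by positivity) (e '' s)
  rw [Equiv.symm_image_image, muH_pi_eq_vol] at h
  have hb : ENNReal.ofReal (Real.sqrt m) = (((m:ℝ≥0) ^ ((1:ℝ)/2) : ℝ≥0) : ℝ≥0∞) := by
    rw [← ENNReal.ofReal_coe_nnreal]
    congr 1
    rw [NNReal.coe_rpow, NNReal.coe_natCast, Real.sqrt_eq_rpow]
  have h1 : ((((m:ℝ≥0) ^ ((1:ℝ)/2) : ℝ≥0) : ℝ≥0∞)) ^ ((m:ℕ):ℝ)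
      = ENNReal.ofReal (Real.sqrt m ^ m) := by
    rw [ENNReal.rpow_natCast, ENNReal.ofReal_pow (Real.sqrt_nonneg _), hb]
  rw [← h1]
  exact h

lemma muH_closedBall_le {m : ℕ} (hm : 0 < m) {ρ : ℝ} (hρ : 0 ≤ ρ) :
    μH[(m:ℝ)] (closedBall (0 : Euc m) ρ)
      ≤ ENNReal.ofReal ((Real.sqrt m * (2 * ρ)) ^ m) := by
  refine (muH_le_vol hm _).trans ?_
  have hsub : (WithLp.equiv 2 (∀ _ : Fin m, ℝ)) '' closedBall (0 : Euc m) ρ ⊆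
      closedBall (0 : ∀ _ : Fin m, ℝ) ρ := by
    rintro y ⟨x, hx, rfl⟩
    rw [mem_closedBall, dist_pi_le_iff hρ]
    intro i
    have hcoord : (WithLp.equiv 2 (∀ _ : Fin m, ℝ) x) i = x i := rfl
    rw [hcoord]
    have hd : dist (x i) ((0 : ∀ _ : Fin m, ℝ) i) = |x i| := by
      simp [Real.dist_eq]
    rw [hd]
    exact (abs_coord_le_norm x i).trans (by simpa using hx)
  calc ENNReal.ofReal (Real.sqrt m ^ m) *
        volume ((WithLp.equiv 2 (∀ _ : Fin m, ℝ)) '' closedBall (0 : Euc m) ρ)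
      ≤ ENNReal.ofReal (Real.sqrt m ^ m) * volume (closedBall (0 : ∀ _ : Fin m, ℝ) ρ) := by
        exact mul_le_mul_right (measure_mono hsub) _
    _ = ENNReal.ofReal (Real.sqrt m ^ m) * ENNReal.ofReal ((2 * ρ) ^ m) := by
        rw [Real.volume_pi_closedBall _ hρ, Fintype.card_fin]
    _ = ENNReal.ofReal ((Real.sqrt m * (2 * ρ)) ^ m) := by
        rw [← ENNReal.ofReal_mul (by positivity), mul_pow]
        ring_nf

lemma ofReal_le_muH_ball {m : ℕ} (hm : 0 < m) {r : ℝ} (hr : 0 < r) :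
    ENNReal.ofReal ((r / Real.sqrt m) ^ m) ≤ μH[(m:ℝ)] (ball (0 : Euc m) r) := by
  refine le_trans ?_ (vol_le_muH _)
  set e := WithLp.equiv 2 (∀ _ : Fin m, ℝ) with he
  set ρ := r / (2 * Real.sqrt m) with hρdef
  have hsm : (0:ℝ) < Real.sqrt m := Real.sqrt_pos.2 (by exact_mod_cast hm)
  have hρ : 0 < ρ := by positivity
  have hsub : closedBall (0 : ∀ _ : Fin m, ℝ) ρ ⊆ e '' ball (0 : Euc m) r := by
    intro y hy
    refine ⟨e.symm y, ?_, e.apply_symm_apply y⟩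
    rw [mem_ball_zero_iff]
    have hyi : ∀ i, |y i| ≤ ρ := by
      intro i
      have h1 := dist_le_pi_dist y (0 : ∀ _ : Fin m, ℝ) i
      have h2 : dist y (0 : ∀ _ : Fin m, ℝ) ≤ ρ := by simpa [mem_closedBall] using hy
      simpa [Real.dist_eq] using h1.trans h2
    have hn2 : ‖e.symm y‖ ^ 2 ≤ m * ρ ^ 2 := by
      rw [euc_norm_sq]
      have hb : ∀ i, (e.symm y i) ^ 2 ≤ ρ ^ 2 := by
        intro i
        have hcoord : e.symm y i = y i := rfl
        rw [hcoord, ← sq_abs]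
        exact pow_le_pow_left₀ (abs_nonneg _) (hyi i) 2
      calc ∑ i, (e.symm y i) ^ 2 ≤ ∑ _i : Fin m, ρ ^ 2 := Finset.sum_le_sum fun i _ => hb i
        _ = m * ρ ^ 2 := by simp [mul_comm]
    have hle : ‖e.symm y‖ ≤ Real.sqrt m * ρ := by
      have h3 : ‖e.symm y‖ ^ 2 ≤ (Real.sqrt m * ρ) ^ 2 := by
        rw [mul_pow, Real.sq_sqrt (by positivity : (0:ℝ) ≤ (m:ℝ))]
        exact hn2
      nlinarith [norm_nonneg (e.symm y), mul_nonneg hsm.le hρ.le]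
    have hlt : Real.sqrt m * ρ < r := by
      rw [hρdef]
      rw [mul_div_assoc', mul_comm, div_lt_iff₀ (by positivity)]
      nlinarith
    exact hle.trans_lt hlt
  have hvol : volume (closedBall (0 : ∀ _ : Fin m, ℝ) ρ)
      = ENNReal.ofReal ((r / Real.sqrt m) ^ m) := by
    rw [Real.volume_pi_closedBall _ hρ.le, Fintype.card_fin]
    congr 1
    rw [hρdef]
    field_simp
  rw [← hvol]
  exact measure_mono hsub

/-! ### Graph pieces of spheres -/

lemma piece_subset_graph {n : ℕ} (i : Fin (n+1)) {R c σ : ℝ} (hc : 0 < c)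
    (hσ : σ = 1 ∨ σ = -1) :
    {x : Euc (n+1) | ‖x‖ = R ∧ c ≤ σ * x i} ⊆
      (fun z : Euc n => insE i (σ * Real.sqrt (R^2 - ‖z‖^2)) z) ''
        (closedBall (0 : Euc n) (Real.sqrt (R^2 - c^2))) := by
  rintro x ⟨hxR, hxc⟩
  have hxn : ‖x‖ ^ 2 = x i ^ 2 + ‖remE i x‖ ^ 2 := remE_norm_sq i x
  have hxi2 : c^2 ≤ x i ^2 := by rcases hσ with rfl | rfl <;> nlinarith
  have h1 : ‖remE i x‖^2 ≤ R^2 - c^2 := by nlinarith [hxR ▸ hxn]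
  refine ⟨remE i x, ?_, ?_⟩
  · rw [mem_closedBall_zero_iff]
    exact (Real.le_sqrt (norm_nonneg _) (by nlinarith [sq_nonneg ‖remE i x‖])).2 h1
  · have hA : R^2 - ‖remE i x‖^2 = x i ^ 2 := by nlinarith [hxR ▸ hxn]
    show insE i (σ * Real.sqrt (R ^ 2 - ‖remE i x‖ ^ 2)) (remE i x) = x
    rw [hA, Real.sqrt_sq_eq_abs]
    rcases hσ with rfl | rfl
    · have hpos : 0 ≤ x i := by nlinarith
      rw [abs_of_nonneg hpos, one_mul]
      exact insE_remE i x
    · have hneg : x i ≤ 0 := by nlinarith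
      rw [abs_of_nonpos hneg]
      rw [show (-1 : ℝ) * -(x i) = x i by ring]
      exact insE_remE i x

lemma sqrt_sub_sqrt_le {A B c : ℝ} (hc : 0 < c) (hA : c^2 ≤ A) (hB : c^2 ≤ B) :
    |Real.sqrt A - Real.sqrt B| ≤ |A - B| / (2 * c) := by
  have hA0 : (0:ℝ) ≤ A := le_trans (by positivity) hA
  have hB0 : (0:ℝ) ≤ B := le_trans (by positivity) hB
  have hsA : c ≤ Real.sqrt A := Real.le_sqrt_of_sq_le hA
  have hsB : c ≤ Real.sqrt B := Real.le_sqrt_of_sq_le hB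
  have hmul : |Real.sqrt A - Real.sqrt B| * (Real.sqrt A + Real.sqrt B) = |A - B| := by
    rw [← abs_of_nonneg (show (0:ℝ) ≤ Real.sqrt A + Real.sqrt B by positivity), ← abs_mul]
    congr 1
    have e1 : Real.sqrt A ^ 2 = A := Real.sq_sqrt hA0
    have e2 : Real.sqrt B ^ 2 = B := Real.sq_sqrt hB0
    nlinarith [e1, e2]
  rw [le_div_iff₀ (by positivity)]
  nlinarith [abs_nonneg (Real.sqrt A - Real.sqrt B), hsA, hsB]

lemma graph_lipschitz {n : ℕ} (i : Fin (n+1)) {R c σ : ℝ} (hc : 0 < c) (hcR : c ≤ R)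
    (hσ : σ = 1 ∨ σ = -1) :
    LipschitzOnWith (Real.toNNReal (Real.sqrt (1 + (R/c)^2)))
      (fun z : Euc n => insE i (σ * Real.sqrt (R^2 - ‖z‖^2)) z)
      (closedBall (0 : Euc n) (Real.sqrt (R^2 - c^2))) := by
  apply LipschitzOnWith.of_dist_le_mul
  intro z hz w hw
  have hRc : (0:ℝ) ≤ R^2 - c^2 := by nlinarith
  have hzn : ‖z‖ ^ 2 ≤ R^2 - c^2 := by
    rw [mem_closedBall_zero_iff] at hz
    nlinarith [Real.sq_sqrt hRc, norm_nonneg z, Real.sqrt_nonneg (R^2 - c^2)]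
  have hwn : ‖w‖ ^ 2 ≤ R^2 - c^2 := by
    rw [mem_closedBall_zero_iff] at hw
    nlinarith [Real.sq_sqrt hRc, norm_nonneg w, Real.sqrt_nonneg (R^2 - c^2)]
  have hzR : ‖z‖ ≤ R := by nlinarith [norm_nonneg z]
  have hwR : ‖w‖ ≤ R := by nlinarith [norm_nonneg w]
  have hA : c^2 ≤ R^2 - ‖z‖^2 := by nlinarith
  have hB : c^2 ≤ R^2 - ‖w‖^2 := by nlinarith
  have hsq := sqrt_sub_sqrt_le hc hA hB
  have habs : |(R^2 - ‖z‖^2) - (R^2 - ‖w‖^2)| ≤ 2 * R * dist z w := by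
    have h1 : |‖w‖ - ‖z‖| ≤ dist z w := by
      rw [dist_comm, dist_eq_norm]
      exact abs_norm_sub_norm_le w z
    have h2 : |(R^2 - ‖z‖^2) - (R^2 - ‖w‖^2)| = |‖w‖ - ‖z‖| * (‖w‖ + ‖z‖) := by
      rw [← abs_of_nonneg (show (0:ℝ) ≤ ‖w‖ + ‖z‖ by positivity), ← abs_mul]
      congr 1; ring
    rw [h2]
    nlinarith [abs_nonneg (‖w‖ - ‖z‖), dist_nonneg (x := z) (y := w)]
  have hfdiff : |σ * Real.sqrt (R^2 - ‖z‖^2) - σ * Real.sqrt (R^2 - ‖w‖^2)|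
      ≤ (R/c) * dist z w := by
    have hσabs : |σ| = 1 := by rcases hσ with rfl | rfl <;> norm_num
    have habs2 : |σ * Real.sqrt (R^2 - ‖z‖^2) - σ * Real.sqrt (R^2 - ‖w‖^2)|
        = |Real.sqrt (R^2 - ‖z‖^2) - Real.sqrt (R^2 - ‖w‖^2)| := by
      rw [← mul_sub, abs_mul, hσabs, one_mul]
    rw [habs2]
    refine hsq.trans ?_
    rw [div_le_iff₀ (by positivity : (0:ℝ) < 2 * c)]
    have hkey : R / c * dist z w * (2 * c) = 2 * R * dist z w := by
      field_simp
    rw [hkey]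
    exact habs
  have hd2 : dist (insE i (σ * Real.sqrt (R^2 - ‖z‖^2)) z)
        (insE i (σ * Real.sqrt (R^2 - ‖w‖^2)) w) ^ 2
      = (σ * Real.sqrt (R^2 - ‖z‖^2) - σ * Real.sqrt (R^2 - ‖w‖^2))^2 + dist z w ^2 :=
    insE_dist_sq i _ _ z w
  have hK : (Real.toNNReal (Real.sqrt (1 + (R/c)^2)) : ℝ) = Real.sqrt (1 + (R/c)^2) :=
    Real.coe_toNNReal _ (Real.sqrt_nonneg _)
  rw [hK]
  have hc1 : (0:ℝ) ≤ 1 + (R/c)^2 := by positivity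
  have hsq1 : Real.sqrt (1 + (R/c)^2) ^ 2 = 1 + (R/c)^2 := Real.sq_sqrt hc1
  have h5 : dist (insE i (σ * Real.sqrt (R^2 - ‖z‖^2)) z)
        (insE i (σ * Real.sqrt (R^2 - ‖w‖^2)) w) ^ 2
      ≤ (Real.sqrt (1 + (R/c)^2) * dist z w) ^ 2 := by
    rw [mul_pow, hsq1, hd2]
    have h6 : (σ * Real.sqrt (R^2 - ‖z‖^2) - σ * Real.sqrt (R^2 - ‖w‖^2))^2
        ≤ ((R/c) * dist z w)^2 := by
      rw [← sq_abs (σ * Real.sqrt (R^2 - ‖z‖^2) - σ * Real.sqrt (R^2 - ‖w‖^2))]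
      have hrc : (0:ℝ) ≤ (R/c) * dist z w :=
        mul_nonneg (div_nonneg (hc.le.trans hcR) hc.le) dist_nonneg
      nlinarith [abs_nonneg (σ * Real.sqrt (R^2 - ‖z‖^2) - σ * Real.sqrt (R^2 - ‖w‖^2))]
    nlinarith [sq_nonneg (dist z w)]
  nlinarith [dist_nonneg (x := insE i (σ * Real.sqrt (R^2 - ‖z‖^2)) z)
      (y := insE i (σ * Real.sqrt (R^2 - ‖w‖^2)) w),
    mul_nonneg (Real.sqrt_nonneg (1 + (R/c)^2)) (dist_nonneg (x := z) (y := w))]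

lemma muH_piece_le {n : ℕ} (hn : 0 < n) (i : Fin (n+1)) {R c σ : ℝ} (hc : 0 < c) (hcR : c ≤ R)
    (hσ : σ = 1 ∨ σ = -1) :
    μH[(n:ℝ)] {x : Euc (n+1) | ‖x‖ = R ∧ c ≤ σ * x i}
      ≤ ENNReal.ofReal ((Real.sqrt (1 + (R/c)^2)) ^ n *
          (Real.sqrt n * (2 * Real.sqrt (R^2 - c^2))) ^ n) := by
  refine (measure_mono (piece_subset_graph i hc hσ)).trans ?_
  refine ((graph_lipschitz i hc hcR hσ).hausdorffMeasure_image_le (by positivity)).trans ?_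
  have h1 : ((Real.toNNReal (Real.sqrt (1 + (R/c)^2)) : ℝ≥0∞)) ^ ((n:ℕ):ℝ)
      = ENNReal.ofReal ((Real.sqrt (1 + (R/c)^2)) ^ n) := by
    rw [ENNReal.rpow_natCast, ← ENNReal.coe_pow]
    rw [← Real.toNNReal_pow (Real.sqrt_nonneg _)]
    rfl
  rw [h1]
  calc ENNReal.ofReal ((Real.sqrt (1 + (R/c)^2)) ^ n)
        * μH[(n:ℝ)] (closedBall (0 : Euc n) (Real.sqrt (R^2 - c^2)))
      ≤ ENNReal.ofReal ((Real.sqrt (1 + (R/c)^2)) ^ n) *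
        ENNReal.ofReal ((Real.sqrt n * (2 * Real.sqrt (R^2 - c^2))) ^ n) :=
        mul_le_mul_right (muH_closedBall_le hn (Real.sqrt_nonneg _)) _
    _ = ENNReal.ofReal ((Real.sqrt (1 + (R/c)^2)) ^ n *
          (Real.sqrt n * (2 * Real.sqrt (R^2 - c^2))) ^ n) :=
        (ENNReal.ofReal_mul (by positivity)).symm

lemma sphere_subset_pieces {n : ℕ} (R : ℝ) :
    sphere (0 : Euc (n+1)) R ⊆
      ⋃ i : Fin (n+1), ({x : Euc (n+1) | ‖x‖ = R ∧ R / Real.sqrt ((n:ℝ)+1) ≤ 1 * x i} ∪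
        {x : Euc (n+1) | ‖x‖ = R ∧ R / Real.sqrt ((n:ℝ)+1) ≤ (-1) * x i}) := by
  intro x hx
  have hxR : ‖x‖ = R := by simpa using hx
  have hex : ∃ i, R^2/((n:ℝ)+1) ≤ x i ^2 := by
    by_contra hcon
    push_neg at hcon
    have hsum : ∑ i, x i ^2 = R^2 := by rw [← euc_norm_sq, hxR]
    have hlt : ∑ i, x i ^ 2 < ∑ _i : Fin (n+1), R^2/((n:ℝ)+1) :=
      Finset.sum_lt_sum_of_nonempty Finset.univ_nonempty fun i _ => hcon i
    rw [hsum, Finset.sum_const, Finset.card_univ, Fintype.card_fin] at hlt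
    have hne : ((n:ℝ)+1) ≠ 0 := by positivity
    rw [nsmul_eq_mul] at hlt
    push_cast at hlt
    rw [mul_div_cancel₀ _ hne] at hlt
    exact lt_irrefl _ hlt
  obtain ⟨i, hi⟩ := hex
  have hR0 : 0 ≤ R := hxR ▸ norm_nonneg x
  have h2 : R / Real.sqrt ((n:ℝ)+1) ≤ |x i| := by
    have hs : Real.sqrt ((n:ℝ)+1) ^ 2 = (n:ℝ)+1 := Real.sq_sqrt (by positivity)
    have hss : (0:ℝ) < Real.sqrt ((n:ℝ)+1) := Real.sqrt_pos.2 (by positivity)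
    have hsq : (R / Real.sqrt ((n:ℝ)+1))^2 ≤ x i ^2 := by
      rw [div_pow, hs]
      exact hi
    nlinarith [abs_nonneg (x i), sq_abs (x i), div_nonneg hR0 hss.le]
  refine mem_iUnion.2 ⟨i, ?_⟩
  rcases le_or_gt 0 (x i) with h | h
  · left; exact ⟨hxR, by rwa [one_mul, ← abs_of_nonneg h]⟩
  · right; refine ⟨hxR, ?_⟩
    rw [show (-1:ℝ) * x i = -(x i) by ring]
    rwa [← abs_of_neg h]

lemma muH_sphere_le {n : ℕ} (hn : 0 < n) {R : ℝ} (hR : 0 < R) (hR2 : R ≤ Real.sqrt 2) :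
    μH[(n:ℝ)] (sphere (0 : Euc (n+1)) R)
      ≤ ENNReal.ofReal (2 * ((n:ℝ)+1) * ((Real.sqrt ((n:ℝ)+2)) ^ n *
          (Real.sqrt n * (2 * Real.sqrt 2)) ^ n)) := by
  set c := R / Real.sqrt ((n:ℝ)+1) with hcdef
  have hs1 : (0:ℝ) < Real.sqrt ((n:ℝ)+1) := Real.sqrt_pos.2 (by positivity)
  have hsge : (1:ℝ) ≤ Real.sqrt ((n:ℝ)+1) := by
    have h := Real.sqrt_le_sqrt (show (1:ℝ) ≤ (n:ℝ)+1 by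
      have := Nat.cast_nonneg (α:=ℝ) n; linarith)
    simpa using h
  have hc : 0 < c := by positivity
  have hcR : c ≤ R := by
    rw [hcdef, div_le_iff₀ hs1]
    nlinarith
  have hpiece : ∀ (i : Fin (n+1)) (σ : ℝ), σ = 1 ∨ σ = -1 →
      μH[(n:ℝ)] {x : Euc (n+1) | ‖x‖ = R ∧ c ≤ σ * x i}
        ≤ ENNReal.ofReal ((Real.sqrt ((n:ℝ)+2)) ^ n *
            (Real.sqrt n * (2 * Real.sqrt 2)) ^ n) := by
    intro i σ hσ
    refine (muH_piece_le hn i hc hcR hσ).trans ?_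
    apply ENNReal.ofReal_le_ofReal
    have e1 : R / c = Real.sqrt ((n:ℝ)+1) := by
      rw [hcdef]
      field_simp
    have e2 : 1 + (R/c)^2 = (n:ℝ)+2 := by
      rw [e1, Real.sq_sqrt (by positivity : (0:ℝ) ≤ (n:ℝ)+1)]
      ring
    rw [e2]
    have e3 : Real.sqrt (R^2 - c^2) ≤ Real.sqrt 2 := by
      apply Real.sqrt_le_sqrt
      nlinarith [Real.sq_sqrt (by norm_num : (0:ℝ) ≤ 2), Real.sqrt_nonneg 2, sq_nonneg c]
    gcongr <;> first
      | positivity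
      | exact e3
  refine (measure_mono (sphere_subset_pieces R)).trans ?_
  refine (measure_iUnion_fintype_le _ _).trans ?_
  have hone : ∀ i : Fin (n+1),
      μH[(n:ℝ)] ({x : Euc (n+1) | ‖x‖ = R ∧ c ≤ 1 * x i} ∪
        {x : Euc (n+1) | ‖x‖ = R ∧ c ≤ (-1) * x i})
      ≤ ENNReal.ofReal (2 * ((Real.sqrt ((n:ℝ)+2)) ^ n *
          (Real.sqrt n * (2 * Real.sqrt 2)) ^ n)) := by
    intro i
    refine (measure_union_le _ _).trans ?_
    have hp1 := hpiece i 1 (Or.inl rfl)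
    have hp2 := hpiece i (-1) (Or.inr rfl)
    calc μH[(n:ℝ)] {x : Euc (n+1) | ‖x‖ = R ∧ c ≤ 1 * x i} +
        μH[(n:ℝ)] {x : Euc (n+1) | ‖x‖ = R ∧ c ≤ (-1) * x i}
        ≤ ENNReal.ofReal ((Real.sqrt ((n:ℝ)+2)) ^ n * (Real.sqrt n * (2 * Real.sqrt 2)) ^ n)
          + ENNReal.ofReal ((Real.sqrt ((n:ℝ)+2)) ^ n * (Real.sqrt n * (2 * Real.sqrt 2)) ^ n) :=
          add_le_add hp1 hp2
      _ = ENNReal.ofReal (2 * ((Real.sqrt ((n:ℝ)+2)) ^ n *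
          (Real.sqrt n * (2 * Real.sqrt 2)) ^ n)) := by
          rw [← ENNReal.ofReal_add (by positivity) (by positivity)]
          ring_nf
  calc ∑ i : Fin (n+1), μH[(n:ℝ)] ({x : Euc (n+1) | ‖x‖ = R ∧ c ≤ 1 * x i} ∪
        {x : Euc (n+1) | ‖x‖ = R ∧ c ≤ (-1) * x i})
      ≤ ∑ _i : Fin (n+1), ENNReal.ofReal (2 * ((Real.sqrt ((n:ℝ)+2)) ^ n *
          (Real.sqrt n * (2 * Real.sqrt 2)) ^ n)) := Finset.sum_le_sum fun i _ => hone i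
    _ = ENNReal.ofReal (2 * ((n:ℝ)+1) * ((Real.sqrt ((n:ℝ)+2)) ^ n *
          (Real.sqrt n * (2 * Real.sqrt 2)) ^ n)) := by
        rw [Finset.sum_const, Finset.card_univ, Fintype.card_fin, nsmul_eq_mul,
          ← ENNReal.ofReal_natCast, ← ENNReal.ofReal_mul (by positivity)]
        push_cast
        ring_nf

/-! ### The cap as a set, and the abscissa -/

lemma cap_eq {n : ℕ} {R s a : ℝ} (hs : 0 < s) (ha : 2*s*a = R^2+s^2-1) :
    sphere (0 : Euc (n+1)) R ∩ ball (s • EuclideanSpace.single (0 : Fin (n+1)) (1:ℝ)) 1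
      = {x : Euc (n+1) | ‖x‖ = R ∧ a < x 0} := by
  ext x
  have hcoord : ∀ i, (x - s • EuclideanSpace.single (0 : Fin (n+1)) (1:ℝ)) i
      = x i - (if i = 0 then s else 0) := by
    intro i
    have h1 : (x - s • EuclideanSpace.single (0 : Fin (n+1)) (1:ℝ)) i
        = x i - (s • EuclideanSpace.single (0 : Fin (n+1)) (1:ℝ)) i := rfl
    have h2 : (s • EuclideanSpace.single (0 : Fin (n+1)) (1:ℝ)) i
        = s * (EuclideanSpace.single (0 : Fin (n+1)) (1:ℝ)) i := rfl
    rw [h1, h2, EuclideanSpace.single_apply]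
    split <;> simp
  have hns : ‖x - s • EuclideanSpace.single (0 : Fin (n+1)) (1:ℝ)‖^2
      = ‖x‖^2 - 2*s*(x 0) + s^2 := by
    rw [euc_norm_sq, euc_norm_sq x, Fin.sum_univ_succ, Fin.sum_univ_succ]
    simp only [hcoord, if_pos rfl]
    have hne : ∀ i : Fin n, (if (i.succ : Fin (n+1)) = 0 then s else 0) = 0 := by
      intro i
      rw [if_neg (Fin.succ_ne_zero i)]
    simp only [hne, sub_zero, if_true]
    ring
  simp only [mem_inter_iff, mem_sphere_zero_iff_norm, mem_ball, dist_eq_norm, mem_setOf_eq]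
  constructor
  · rintro ⟨h1, h2⟩
    refine ⟨h1, ?_⟩
    have h3 : ‖x - s • EuclideanSpace.single (0 : Fin (n+1)) (1:ℝ)‖^2 < 1 := by
      nlinarith [norm_nonneg (x - s • EuclideanSpace.single (0 : Fin (n+1)) (1:ℝ))]
    rw [hns, h1] at h3
    nlinarith
  · rintro ⟨h1, h2⟩
    refine ⟨h1, ?_⟩
    have h3 : ‖x - s • EuclideanSpace.single (0 : Fin (n+1)) (1:ℝ)‖^2 < 1 := by
      rw [hns, h1]
      nlinarith
    nlinarith [norm_nonneg (x - s • EuclideanSpace.single (0 : Fin (n+1)) (1:ℝ))]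

lemma ball_subset_rem_cap {n : ℕ} {R a : ℝ} (ha : 0 ≤ a) (hR : 0 ≤ R) (haR : a^2 ≤ R^2) :
    ball (0 : Euc n) (Real.sqrt (R^2 - a^2))
      ⊆ remE 0 '' {x : Euc (n+1) | ‖x‖ = R ∧ a < x 0} := by
  intro z hz
  rw [mem_ball_zero_iff] at hz
  have hz2 : ‖z‖^2 < R^2 - a^2 := (Real.lt_sqrt (norm_nonneg z)).1 hz
  have hpos : (0:ℝ) ≤ R^2 - ‖z‖^2 := by nlinarith [sq_nonneg a]
  set cz := Real.sqrt (R^2 - ‖z‖^2) with hcz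
  have hcz2 : cz^2 = R^2 - ‖z‖^2 := Real.sq_sqrt hpos
  refine ⟨insE 0 cz z, ⟨?_, ?_⟩, ?_⟩
  · have h1 : ‖insE 0 cz z‖^2 = R^2 := by rw [insE_norm_sq, hcz2]; ring
    have h2 : (0:ℝ) ≤ ‖insE 0 cz z‖ := norm_nonneg _
    nlinarith [h1, h2]
  · show a < insE 0 cz z 0
    rw [insE_same]
    exact (Real.lt_sqrt ha).2 (by nlinarith)
  · refine euc_ext fun j => ?_
    show remE 0 (insE 0 cz z) j = z j
    rw [remE_apply]
    exact insE_succAbove 0 cz z j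

lemma abscissa_bounds {R t ε₀ : ℝ} (hR : 1 ≤ R) (hε : ε₀ ∈ Ioo (0:ℝ) 1)
    (ht : t ∈ Icc (-1+ε₀) (1-ε₀)) :
    0 < R + t ∧ 0 < capAbscissa R t ∧ 2*(R+t)*capAbscissa R t = R^2+(R+t)^2-1 ∧
    ε₀/4 ≤ R^2 - capAbscissa R t^2 ∧ R^2 - capAbscissa R t^2 ≤ 1 := by
  obtain ⟨hε0, hε1⟩ := hε
  obtain ⟨ht1, ht2⟩ := ht
  have hs : 0 < R + t := by linarith
  have ha_eq : 2*(R+t)*capAbscissa R t = R^2+(R+t)^2-1 := by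
    rw [capAbscissa]
    field_simp
  refine ⟨hs, ?_, ha_eq, ?_, ?_⟩
  · have hnum : (0:ℝ) < R^2+(R+t)^2-1 := by nlinarith
    have hden : (0:ℝ) < 2*(R+t) := by linarith
    rw [capAbscissa]
    exact div_pos hnum hden
  · set a := capAbscissa R t with hadef
    have hid : 4*(R+t)^2*(R^2-a^2) = (1-t^2)*((2*R+t)^2-1) := by
      have h2 : (2*(R+t)*a)^2 = (R^2+(R+t)^2-1)^2 := by rw [ha_eq]
      nlinarith [h2]
    have h1t : ε₀ ≤ 1 - t^2 := by nlinarith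
    have h2Rt : (R+t)^2 ≤ (2*R+t)^2 - 1 := by nlinarith
    have hprod : ε₀ * (R+t)^2 ≤ (1-t^2) * ((2*R+t)^2-1) :=
      mul_le_mul h1t h2Rt (sq_nonneg _) (by linarith)
    nlinarith [hid, hprod, mul_pos hs hs]
  · set a := capAbscissa R t with hadef
    have h2 : (2*(R+t)*a)^2 = (R^2+(R+t)^2-1)^2 := by rw [ha_eq]
    nlinarith [h2, sq_nonneg (R^2-1-(R+t)^2), mul_pos hs hs]


/-- The lower constant. -/
def lowC (n : ℕ) : ℝ := (1/Real.sqrt n)^n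

/-- The upper constant. -/
def upC (n : ℕ) : ℝ := (Real.sqrt 3 * (Real.sqrt n * 2))^n
  + 2*((n:ℝ)+1) * ((Real.sqrt ((n:ℝ)+2))^n * (Real.sqrt n * (2*Real.sqrt 2))^n) * (Real.sqrt 2)^n

lemma main_std {n : ℕ} (hn : 0 < n) {R t ε₀ : ℝ} (hR : 1 ≤ R) (hε : ε₀ ∈ Ioo (0:ℝ) 1)
    (ht : t ∈ Icc (-1+ε₀) (1-ε₀)) :
    ENNReal.ofReal (lowC n * Real.sqrt (R^2 - capAbscissa R t^2) ^ n)
      ≤ μH[(n:ℝ)] (sphere (0:Euc (n+1)) R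
          ∩ ball ((R+t) • EuclideanSpace.single (0 : Fin (n+1)) (1:ℝ)) 1) ∧
    μH[(n:ℝ)] (sphere (0:Euc (n+1)) R
          ∩ ball ((R+t) • EuclideanSpace.single (0 : Fin (n+1)) (1:ℝ)) 1)
      ≤ ENNReal.ofReal (upC n * Real.sqrt (R^2 - capAbscissa R t^2) ^ n) := by
  obtain ⟨hs, hapos, haeq, hlowb, hupb⟩ := abscissa_bounds hR hε ht
  have hε0 := hε.1
  set a := capAbscissa R t with hadef
  set r := Real.sqrt (R^2 - a^2) with hrdef
  have hra2 : (0:ℝ) < R^2 - a^2 := by linarith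
  have hrpos : 0 < r := Real.sqrt_pos.2 hra2
  have hr2 : r^2 = R^2 - a^2 := Real.sq_sqrt hra2.le
  have hset : sphere (0:Euc (n+1)) R
      ∩ ball ((R+t) • EuclideanSpace.single (0 : Fin (n+1)) (1:ℝ)) 1
      = {x : Euc (n+1) | ‖x‖ = R ∧ a < x 0} := cap_eq hs haeq
  rw [hset]
  constructor
  · -- lower bound
    have h1 : μH[(n:ℝ)] (remE (0 : Fin (n+1)) '' {x : Euc (n+1) | ‖x‖ = R ∧ a < x 0})
        ≤ μH[(n:ℝ)] {x : Euc (n+1) | ‖x‖ = R ∧ a < x 0} := by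
      have h := (remE_lipschitz (0 : Fin (n+1))).hausdorffMeasure_image_le
        (show (0:ℝ) ≤ (n:ℝ) by positivity) {x : Euc (n+1) | ‖x‖ = R ∧ a < x 0}
      simpa using h
    have h0 : μH[(n:ℝ)] (ball (0 : Euc n) r)
        ≤ μH[(n:ℝ)] (remE (0 : Fin (n+1)) '' {x : Euc (n+1) | ‖x‖ = R ∧ a < x 0}) :=
      measure_mono (ball_subset_rem_cap hapos.le (by linarith) (by linarith))
    refine le_trans ?_ (h0.trans h1)
    have h2 := ofReal_le_muH_ball (m := n) hn hrpos
    have h3 : (r / Real.sqrt n)^n = lowC n * r ^ n := by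
      rw [lowC, ← mul_pow]
      congr 1
      ring
    rw [h3] at h2
    exact h2
  · -- upper bound
    rcases le_or_gt (R^2) (2*a^2) with hcase | hcase
    · -- steep case: single graph over the hyperplane
      have haR : a ≤ R := by nlinarith
      refine le_trans (measure_mono ?_)
        ((muH_piece_le hn (0 : Fin (n+1)) hapos haR (Or.inl rfl)).trans ?_)
      · intro x hx
        exact ⟨hx.1, by rw [one_mul]; exact hx.2.le⟩
      · apply ENNReal.ofReal_le_ofReal
        have hra : (R/a)^2 ≤ 2 := by
          rw [div_pow, div_le_iff₀ (by positivity)]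
          nlinarith
        have h4 : Real.sqrt (1+(R/a)^2) ≤ Real.sqrt 3 := Real.sqrt_le_sqrt (by linarith)
        calc Real.sqrt (1+(R/a)^2)^n * (Real.sqrt n*(2*r))^n
            ≤ Real.sqrt 3^n * (Real.sqrt n*(2*r))^n :=
              mul_le_mul_of_nonneg_right
                (pow_le_pow_left₀ (Real.sqrt_nonneg _) h4 n) (by positivity)
          _ = (Real.sqrt 3*(Real.sqrt n*2))^n * r^n := by
              rw [← mul_pow, ← mul_pow]
              congr 1
              ring
          _ ≤ upC n * r^n := by
              refine mul_le_mul_of_nonneg_right ?_ (by positivity)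
              rw [upC]
              have : (0:ℝ) ≤ 2*((n:ℝ)+1) * ((Real.sqrt ((n:ℝ)+2))^n
                  * (Real.sqrt n * (2*Real.sqrt 2))^n) * (Real.sqrt 2)^n := by positivity
              linarith
    · -- shallow case: the whole sphere is small
      have hRle2 : R^2 ≤ 2 := by nlinarith
      have hR2 : R ≤ Real.sqrt 2 := by
        have hsq2 : Real.sqrt 2 ^ 2 = 2 := Real.sq_sqrt (by norm_num)
        nlinarith [Real.sqrt_nonneg 2]
      have hsub : {x : Euc (n+1) | ‖x‖ = R ∧ a < x 0} ⊆ sphere (0 : Euc (n+1)) R := by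
        intro x hx
        simpa [mem_sphere_zero_iff_norm] using hx.1
      refine (measure_mono hsub).trans ((muH_sphere_le hn (by linarith) hR2).trans ?_)
      apply ENNReal.ofReal_le_ofReal
      set CB := 2 * ((n:ℝ)+1) * ((Real.sqrt ((n:ℝ)+2)) ^ n *
          (Real.sqrt n * (2 * Real.sqrt 2)) ^ n) with hCB
      have hCB0 : 0 ≤ CB := by rw [hCB]; positivity
      have hsr : 1 ≤ Real.sqrt 2 * r := by
        have h6 : 1 ≤ (Real.sqrt 2 * r)^2 := by
          rw [mul_pow, Real.sq_sqrt (by norm_num : (0:ℝ) ≤ 2)]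
          nlinarith
        nlinarith [mul_nonneg (Real.sqrt_nonneg 2) hrpos.le]
      have h7 : 1 ≤ (Real.sqrt 2 * r)^n := one_le_pow₀ hsr
      calc CB ≤ CB * ((Real.sqrt 2 * r)^n) := le_mul_of_one_le_right hCB0 h7
        _ = CB * (Real.sqrt 2)^n * r^n := by rw [mul_pow]; ring
        _ ≤ upC n * r^n := by
            refine mul_le_mul_of_nonneg_right ?_ (by positivity)
            rw [upC, hCB]
            have : (0:ℝ) ≤ (Real.sqrt 3 * (Real.sqrt n * 2))^n := by positivity
            linarith

lemma capMeasure_std {d : ℕ} (hd : 0 < d) (e : Euc d) (he : ‖e‖ = 1) (R t : ℝ) :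
    capMeasure d e R t
      = capMeasure d (EuclideanSpace.single (⟨0, hd⟩ : Fin d) (1:ℝ)) R t := by
  classical
  have hcard : Module.finrank ℝ (Euc d) = Fintype.card (Fin d) := by
    simp [finrank_euclideanSpace]
  have horth : Orthonormal ℝ (({(⟨0, hd⟩ : Fin d)} : Set (Fin d)).restrict
      (fun _ : Fin d => e)) := by
    constructor
    · intro i
      exact he
    · intro i j hij
      exact absurd (Subtype.ext (i.2.trans j.2.symm)) hij
  obtain ⟨b, hb⟩ := horth.exists_orthonormalBasis_extension_of_card_eq hcard
  have hbe : b ⟨0, hd⟩ = e := hb _ rfl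
  set F := b.repr with hF
  have hFe : F e = EuclideanSpace.single (⟨0, hd⟩ : Fin d) (1:ℝ) := by
    rw [← hbe]
    exact b.repr_self _
  have himg : F.toIsometryEquiv '' (sphere (0 : Euc d) R ∩ ball ((R+t) • e) 1)
      = sphere (0 : Euc d) R ∩ ball ((R+t) • EuclideanSpace.single (⟨0, hd⟩ : Fin d) (1:ℝ)) 1 := by
    rw [Set.image_inter F.toIsometryEquiv.injective]
    rw [IsometryEquiv.image_sphere, IsometryEquiv.image_ball]
    have h0 : F.toIsometryEquiv (0 : Euc d) = 0 := by simp
    have h1 : F.toIsometryEquiv ((R+t) • e) = (R+t) • EuclideanSpace.single (⟨0, hd⟩ : Fin d) (1:ℝ) := by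
      show F ((R+t) • e) = _
      rw [LinearIsometryEquiv.map_smul, hFe]
    rw [h0, h1]
  unfold capMeasure
  rw [← himg, IsometryEquiv.hausdorffMeasure_image]

end Stmt8Aux

open Stmt8Aux in
theorem stmt8 (d : ℕ) (hd : 2 ≤ d) :
    ∃ c₁ c₂ : ℝ, 0 < c₁ ∧ 0 < c₂ ∧
      ∀ ε₀ : ℝ, ε₀ ∈ Ioo (0 : ℝ) 1 →
        ∃ c₃ : ℝ, 0 < c₃ ∧
          ∀ e : Euc d, ‖e‖ = 1 →
            ∀ R : ℝ, 1 ≤ R → ∀ t : ℝ, t ∈ Icc (-1 + ε₀) (1 - ε₀) →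
              ε₀ / 4 ≤ R ^ 2 - capAbscissa R t ^ 2 ∧
              ENNReal.ofReal (c₁ * (R ^ 2 - capAbscissa R t ^ 2) ^ (((d : ℝ) - 1) / 2))
                ≤ capMeasure d e R t ∧
              capMeasure d e R t
                ≤ ENNReal.ofReal (c₂ * (R ^ 2 - capAbscissa R t ^ 2) ^ (((d : ℝ) - 1) / 2)) ∧
              ENNReal.ofReal c₃ ≤ capMeasure d e R t := by
  obtain ⟨n, rfl⟩ : ∃ n, d = n + 1 := ⟨d - 1, by omega⟩
  have hn : 0 < n := by omega
  have hlowC : 0 < lowC n := by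
    rw [lowC]
    have : (0:ℝ) < Real.sqrt n := Real.sqrt_pos.2 (by exact_mod_cast hn)
    positivity
  have hupC : 0 < upC n := by
    rw [upC]
    positivity
  refine ⟨lowC n, upC n, hlowC, hupC, ?_⟩
  intro ε₀ hε
  refine ⟨lowC n * Real.sqrt (ε₀/4) ^ n, by
    have : (0:ℝ) < Real.sqrt (ε₀/4) := Real.sqrt_pos.2 (by nlinarith [hε.1])
    positivity, ?_⟩
  intro e he R hR t ht
  obtain ⟨hs, hapos, haeq, hlowb, hupb⟩ := abscissa_bounds hR hε ht
  have hε0 := hε.1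
  set a := capAbscissa R t with hadef
  have hra2 : (0:ℝ) < R^2 - a^2 := by linarith
  -- identify the measure
  have hzero : (⟨0, by omega⟩ : Fin (n+1)) = 0 := rfl
  have hcap : capMeasure (n+1) e R t
      = μH[(n:ℝ)] (sphere (0:Euc (n+1)) R
          ∩ ball ((R+t) • EuclideanSpace.single (0 : Fin (n+1)) (1:ℝ)) 1) := by
    rw [capMeasure_std (by omega) e he]
    unfold capMeasure
    have hcast : ((n+1:ℕ):ℝ) - 1 = (n:ℝ) := by push_cast; ring
    rw [hcast, hzero]
  -- rpow to pow conversion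
  have hrpow : (R ^ 2 - a ^ 2) ^ ((((n+1:ℕ) : ℝ) - 1) / 2)
      = Real.sqrt (R^2 - a^2) ^ n := by
    have hcast : ((n+1:ℕ):ℝ) - 1 = (n:ℝ) := by push_cast; ring
    rw [hcast]
    rw [← Real.rpow_natCast (Real.sqrt (R^2 - a^2)) n, Real.sqrt_eq_rpow,
      ← Real.rpow_mul hra2.le]
    congr 1
    ring
  obtain ⟨hmain1, hmain2⟩ := main_std hn hR hε ht
  refine ⟨hlowb, ?_, ?_, ?_⟩
  · rw [hcap, hrpow]
    exact hmain1
  · rw [hcap, hrpow]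
    exact hmain2
  · rw [hcap]
    refine le_trans ?_ hmain1
    apply ENNReal.ofReal_le_ofReal
    have hmono : Real.sqrt (ε₀/4) ^ n ≤ Real.sqrt (R^2 - a^2) ^ n := by
      apply pow_le_pow_left₀ (Real.sqrt_nonneg _)
      exact Real.sqrt_le_sqrt hlowb
    exact mul_le_mul_of_nonneg_left hmono hlowC.le
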